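/- The map g(x) = (2x₂/(1+x₁), 2√(1-|x|²)/(1+x₁)) is an isometry from the Funk model (D, F_F) to the Finsler–Poincaré upper half plane (H, F_H): for all x ∈ D and v ∈ ℝ², F_F(x,v) = F_H(g(x), Dg_x(v)). -/

import Mathlib

noncomputable section

/-- The Euclidean plane. -/
abbrev E2 := EuclideanSpace ℝ (Fin 2)

/-- The open unit disk. -/
def Dset : Set E2 := {x | ‖x‖ < 1}

/-- The upper half plane. -/
def Hset : Set E2 := {x | x 1 > 0}

/-- g(x) = (2x₂/(1+x₁), 2√(1-|x|²)/(1+x₁)). -/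
def gFH (x : E2) : E2 := !₂[2 * x 1 / (1 + x 0), 2 * Real.sqrt (1 - ‖x‖ ^ 2) / (1 + x 0)]

/-- The Funk metric on the disk. -/
def FF (x v : E2) : ℝ :=
  (Real.sqrt ((1 - ‖x‖ ^ 2) * ‖v‖ ^ 2 + (inner ℝ x v : ℝ) ^ 2) + (inner ℝ x v : ℝ)) / (1 - ‖x‖ ^ 2)

/-- w(x) = (2x₁x₂, x₂²-x₁²-4). -/
def wH (x : E2) : E2 := !₂[2 * x 0 * x 1, x 1 ^ 2 - x 0 ^ 2 - 4]

/-- The Finsler-Poincaré metric on the upper half plane. -/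
def FH (x v : E2) : ℝ := ‖v‖ / x 1 + (inner ℝ (wH x) v : ℝ) / (x 1 * (4 + ‖x‖ ^ 2))

lemma norm_sq_E2 (y : E2) : ‖y‖ ^ 2 = y 0 ^ 2 + y 1 ^ 2 := by
  rw [EuclideanSpace.norm_eq, Real.sq_sqrt (by positivity)]
  simp [Fin.sum_univ_two, sq_abs]

lemma norm_E2 (y : E2) : ‖y‖ = Real.sqrt (y 0 ^ 2 + y 1 ^ 2) := by
  rw [← norm_sq_E2, Real.sqrt_sq (norm_nonneg y)]

lemma inner_E2 (x y : E2) : (inner ℝ x y : ℝ) = x 0 * y 0 + x 1 * y 1 := by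
  simp [PiLp.inner_apply, Fin.sum_univ_two]
  ring

/-- Part A of the key algebraic identity. -/
lemma keyA (a b u w s : ℝ) (hp : 0 < 1 + a) (hs : 0 < s)
    (hs2 : s ^ 2 = 1 - (a ^ 2 + b ^ 2)) :
    Real.sqrt ((1 - (a ^ 2 + b ^ 2)) * (u ^ 2 + w ^ 2) + (a * u + b * w) ^ 2) /
        (1 - (a ^ 2 + b ^ 2)) =
      Real.sqrt (((2 * (1 + a) * w - 2 * b * u) / (1 + a) ^ 2) ^ 2 +
          (-(2 * (((1 + a) - b ^ 2) * u + b * (1 + a) * w)) / (s * (1 + a) ^ 2)) ^ 2) /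
        (2 * s / (1 + a)) := by
  have hq : (0:ℝ) < 1 - (a ^ 2 + b ^ 2) := by nlinarith [sq_nonneg s]
  have hX : (0:ℝ) ≤ (1 - (a ^ 2 + b ^ 2)) * (u ^ 2 + w ^ 2) + (a * u + b * w) ^ 2 := by positivity
  have hY : (0:ℝ) ≤ ((2 * (1 + a) * w - 2 * b * u) / (1 + a) ^ 2) ^ 2 +
      (-(2 * (((1 + a) - b ^ 2) * u + b * (1 + a) * w)) / (s * (1 + a) ^ 2)) ^ 2 := by positivity
  rw [div_eq_div_iff hq.ne' (by positivity)]
  have hsq : (Real.sqrt ((1 - (a ^ 2 + b ^ 2)) * (u ^ 2 + w ^ 2) + (a * u + b * w) ^ 2) *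
      (2 * s / (1 + a))) ^ 2 =
      (Real.sqrt (((2 * (1 + a) * w - 2 * b * u) / (1 + a) ^ 2) ^ 2 +
          (-(2 * (((1 + a) - b ^ 2) * u + b * (1 + a) * w)) / (s * (1 + a) ^ 2)) ^ 2) *
        (1 - (a ^ 2 + b ^ 2))) ^ 2 := by
    rw [mul_pow, mul_pow, Real.sq_sqrt hX, Real.sq_sqrt hY]
    field_simp
    rw [show s ^ 4 = (s ^ 2) ^ 2 by ring, hs2]
    ring
  calc Real.sqrt ((1 - (a ^ 2 + b ^ 2)) * (u ^ 2 + w ^ 2) + (a * u + b * w) ^ 2) *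
        (2 * s / (1 + a))
      = Real.sqrt ((Real.sqrt ((1 - (a ^ 2 + b ^ 2)) * (u ^ 2 + w ^ 2) + (a * u + b * w) ^ 2) *
          (2 * s / (1 + a))) ^ 2) := by
        rw [Real.sqrt_sq (by positivity)]
    _ = _ := by
        rw [hsq, Real.sqrt_sq (by positivity)]

/-- Part B of the key algebraic identity. -/
lemma keyB (a b u w s : ℝ) (hp : 0 < 1 + a) (hs : 0 < s)
    (hs2 : s ^ 2 = 1 - (a ^ 2 + b ^ 2)) :
    (a * u + b * w) / (1 - (a ^ 2 + b ^ 2)) =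
      (2 * (2 * b / (1 + a)) * (2 * s / (1 + a)) * ((2 * (1 + a) * w - 2 * b * u) / (1 + a) ^ 2) +
          ((2 * s / (1 + a)) ^ 2 - (2 * b / (1 + a)) ^ 2 - 4) *
            (-(2 * (((1 + a) - b ^ 2) * u + b * (1 + a) * w)) / (s * (1 + a) ^ 2))) /
        (2 * s / (1 + a) * (4 + ((2 * b / (1 + a)) ^ 2 + (2 * s / (1 + a)) ^ 2))) := by
  have hq : (0:ℝ) < 1 - (a ^ 2 + b ^ 2) := by nlinarith [sq_nonneg s]
  rw [div_eq_div_iff hq.ne' (by positivity)]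
  field_simp
  rw [hs2]
  ring

lemma gFH_split : gFH = fun y : E2 =>
    (2 * y 1 / (1 + y 0)) • EuclideanSpace.single (0 : Fin 2) (1:ℝ)
    + (2 * Real.sqrt (1 - ‖y‖ ^ 2) / (1 + y 0)) • EuclideanSpace.single (1 : Fin 2) (1:ℝ) := by
  funext y
  ext i
  fin_cases i <;>
    simp [gFH, EuclideanSpace.single_apply, PiLp.add_apply, PiLp.smul_apply]

set_option maxHeartbeats 1000000 in
theorem gFH_isometry (x : E2) (hx : x ∈ Dset) (v : E2) :
    FF x v = FH (gFH x) (fderiv ℝ gFH x v) := by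
  have hxn : ‖x‖ < 1 := hx
  have hr : x 0 ^ 2 + x 1 ^ 2 < 1 := by
    have := norm_sq_E2 x
    nlinarith [norm_nonneg x]
  have ha : x 0 ^ 2 < 1 := by nlinarith [sq_nonneg (x 1)]
  have hp : (0:ℝ) < 1 + x 0 := by nlinarith [sq_nonneg (1 + x 0)]
  have hq : (0:ℝ) < 1 - (x 0 ^ 2 + x 1 ^ 2) := by linarith
  have hqn : (0:ℝ) < 1 - ‖x‖ ^ 2 := by rw [norm_sq_E2]; linarith
  set s := Real.sqrt (1 - ‖x‖ ^ 2) with hs_def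
  have hs : 0 < s := Real.sqrt_pos.mpr hqn
  have hs2 : s ^ 2 = 1 - (x 0 ^ 2 + x 1 ^ 2) := by
    rw [hs_def, Real.sq_sqrt hqn.le, norm_sq_E2]
  -- derivative computation
  set P0 := EuclideanSpace.proj (𝕜 := ℝ) (0 : Fin 2) with hP0
  set P1 := EuclideanSpace.proj (𝕜 := ℝ) (1 : Fin 2) with hP1
  have hy0 : HasFDerivAt (fun y : E2 => y 0) P0 x := PiLp.hasFDerivAt_apply 2 x 0
  have hy1 : HasFDerivAt (fun y : E2 => y 1) P1 x := PiLp.hasFDerivAt_apply 2 x 1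
  have hden : HasFDerivAt (fun y : E2 => 1 + y 0) P0 x := hy0.const_add 1
  have hinv : HasFDerivAt (fun y : E2 => (1 + y 0)⁻¹)
      ((-(((1:ℝ) + x 0) ^ 2)⁻¹) • P0) x :=
    (hasDerivAt_inv hp.ne').comp_hasFDerivAt x hden
  have hnum0 : HasFDerivAt (fun y : E2 => 2 * y 1) ((2:ℝ) • P1) x := hy1.const_mul 2
  have hf0 : HasFDerivAt (fun y : E2 => 2 * y 1 / (1 + y 0))
      ((2 * x 1) • ((-(((1:ℝ) + x 0) ^ 2)⁻¹) • P0) + ((1 + x 0)⁻¹) • ((2:ℝ) • P1)) x := by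
    exact hnum0.mul hinv
  have hqd : HasFDerivAt (fun y : E2 => 1 - ‖y‖ ^ 2)
      (-((x 0 • P0 + x 0 • P0) + (x 1 • P1 + x 1 • P1))) x := by
    have : (fun y : E2 => 1 - ‖y‖ ^ 2) = fun y : E2 => 1 - (y 0 * y 0 + y 1 * y 1) := by
      funext y; rw [norm_sq_E2]; ring
    rw [this]
    exact ((hy0.mul hy0).add (hy1.mul hy1)).const_sub 1
  have hsqd : HasFDerivAt (fun y : E2 => Real.sqrt (1 - ‖y‖ ^ 2))
      ((1 / (2 * Real.sqrt (1 - ‖x‖ ^ 2))) •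
        (-((x 0 • P0 + x 0 • P0) + (x 1 • P1 + x 1 • P1)))) x :=
    hqd.sqrt hqn.ne'
  have hnum1 := hsqd.const_mul 2
  have hf1 : HasFDerivAt (fun y : E2 => 2 * Real.sqrt (1 - ‖y‖ ^ 2) / (1 + y 0))
      ((2 * Real.sqrt (1 - ‖x‖ ^ 2)) • ((-(((1:ℝ) + x 0) ^ 2)⁻¹) • P0)
        + ((1 + x 0)⁻¹) • ((2:ℝ) • ((1 / (2 * Real.sqrt (1 - ‖x‖ ^ 2))) •
          (-((x 0 • P0 + x 0 • P0) + (x 1 • P1 + x 1 • P1)))))) x := by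
    exact hnum1.mul hinv
  have hD : HasFDerivAt gFH
      ((((2 * x 1) • ((-(((1:ℝ) + x 0) ^ 2)⁻¹) • P0) + ((1 + x 0)⁻¹) • ((2:ℝ) • P1)).smulRight
          (EuclideanSpace.single (0 : Fin 2) (1:ℝ)))
        + (((2 * Real.sqrt (1 - ‖x‖ ^ 2)) • ((-(((1:ℝ) + x 0) ^ 2)⁻¹) • P0)
            + ((1 + x 0)⁻¹) • ((2:ℝ) • ((1 / (2 * Real.sqrt (1 - ‖x‖ ^ 2))) •
              (-((x 0 • P0 + x 0 • P0) + (x 1 • P1 + x 1 • P1)))))).smulRight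
          (EuclideanSpace.single (1 : Fin 2) (1:ℝ)))) x := by
    rw [gFH_split]
    exact (hf0.smul_const _).add (hf1.smul_const _)
  rw [hD.fderiv]
  set Dv := ((((2 * x 1) • ((-(((1:ℝ) + x 0) ^ 2)⁻¹) • P0) + ((1 + x 0)⁻¹) • ((2:ℝ) • P1)).smulRight
          (EuclideanSpace.single (0 : Fin 2) (1:ℝ)))
        + (((2 * Real.sqrt (1 - ‖x‖ ^ 2)) • ((-(((1:ℝ) + x 0) ^ 2)⁻¹) • P0)
            + ((1 + x 0)⁻¹) • ((2:ℝ) • ((1 / (2 * Real.sqrt (1 - ‖x‖ ^ 2))) •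
              (-((x 0 • P0 + x 0 • P0) + (x 1 • P1 + x 1 • P1)))))).smulRight
          (EuclideanSpace.single (1 : Fin 2) (1:ℝ)))) v with hDv
  have hd0 : Dv 0 = (2 * (1 + x 0) * v 1 - 2 * x 1 * v 0) / (1 + x 0) ^ 2 := by
    rw [hDv]
    simp [ContinuousLinearMap.smulRight_apply, EuclideanSpace.single_apply,
      PiLp.add_apply, PiLp.smul_apply, hP0, hP1]
    field_simp
    ring
  have hd1 : Dv 1 = -(2 * (((1 + x 0) - x 1 ^ 2) * v 0 + x 1 * (1 + x 0) * v 1)) /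
      (s * (1 + x 0) ^ 2) := by
    rw [hDv]
    simp [ContinuousLinearMap.smulRight_apply, EuclideanSpace.single_apply,
      PiLp.add_apply, PiLp.smul_apply, hP0, hP1, ← hs_def]
    field_simp
    linear_combination (-2 * v 0) * hs2
  have hg0 : gFH x 0 = 2 * x 1 / (1 + x 0) := by simp [gFH]
  have hg1 : gFH x 1 = 2 * s / (1 + x 0) := by simp [gFH, ← hs_def]
  have hw0 : wH (gFH x) 0 = 2 * (2 * x 1 / (1 + x 0)) * (2 * s / (1 + x 0)) := by
    simp [wH, hg0, hg1]
  have hw1 : wH (gFH x) 1 = (2 * s / (1 + x 0)) ^ 2 - (2 * x 1 / (1 + x 0)) ^ 2 - 4 := by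
    simp [wH, hg0, hg1]
  rw [FF, FH, inner_E2 x v, inner_E2 (wH (gFH x)) Dv, norm_sq_E2 v, norm_sq_E2 x,
    norm_sq_E2 (gFH x), norm_E2 Dv, hd0, hd1, hg0, hg1, hw0, hw1]
  have hFF := keyA (x 0) (x 1) (v 0) (v 1) s hp hs hs2
  have hFB := keyB (x 0) (x 1) (v 0) (v 1) s hp hs hs2
  rw [add_div]
  rw [hFF, hFB]
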